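/- For every Y ∈ ℝ and K⁺, K⁻ ∈ ℝⁿ, taking u = K⁺·Y·1{Y ≥ 0} + K⁻·Y·1{Y < 0} (so Y' = sY + P'u), the random variable q is integrable and E[q] = ρ'²s²·Y² + (2ρ's·α⁺(K⁺) + β⁺(K⁺))·Y²·1{Y ≥ 0} + (2ρ's·α⁻(K⁻) + β⁻(K⁻))·Y²·1{Y < 0}. -/

import Mathlib

open MeasureTheory

/-- The random variable `m = ρ'Y' + a⁺Y'·1{Y' ≥ 0} + a⁻Y'·1{Y' < 0}`,
where `Y' = sY + P'u`. -/
noncomputable def mRV {Ω : Type*} {n : ℕ} (P : Ω → EuclideanSpace ℝ (Fin n))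
    (s ρ' ap am : ℝ) (Y : ℝ) (u : EuclideanSpace ℝ (Fin n)) (ω : Ω) : ℝ :=
  let Y' : ℝ := s * Y + inner ℝ (P ω) u
  ρ' * Y' + ap * Y' * (if 0 ≤ Y' then (1:ℝ) else 0) +
    am * Y' * (if Y' < 0 then (1:ℝ) else 0)

/-- The random variable `q = ρ'²Y'² + (2ρ'a⁺+b⁺)Y'²·1{Y' ≥ 0} + (2ρ'a⁻+b⁻)Y'²·1{Y' < 0}`,
where `Y' = sY + P'u`. -/
noncomputable def qRV {Ω : Type*} {n : ℕ} (P : Ω → EuclideanSpace ℝ (Fin n))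
    (s ρ' ap am bp bm : ℝ) (Y : ℝ) (u : EuclideanSpace ℝ (Fin n)) (ω : Ω) : ℝ :=
  let Y' : ℝ := s * Y + inner ℝ (P ω) u
  ρ' ^ 2 * Y' ^ 2 + (2 * ρ' * ap + bp) * Y' ^ 2 * (if 0 ≤ Y' then (1:ℝ) else 0) +
    (2 * ρ' * am + bm) * Y' ^ 2 * (if Y' < 0 then (1:ℝ) else 0)

/-- `α⁺(K) = ρ'E[P']K + E[a⁺(s+P'K)·1{s+P'K ≥ 0}] + E[a⁻(s+P'K)·1{s+P'K < 0}]`. -/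
noncomputable def alphaPlus {Ω : Type*} [MeasurableSpace Ω] (ℙ : Measure Ω) {n : ℕ}
    (P : Ω → EuclideanSpace ℝ (Fin n)) (s ρ' ap am : ℝ)
    (K : EuclideanSpace ℝ (Fin n)) : ℝ :=
  let pk : Ω → ℝ := fun ω => inner ℝ (P ω) K
  ρ' * (∫ ω, pk ω ∂ℙ) +
  (∫ ω, ap * (s + pk ω) * (if 0 ≤ s + pk ω then (1:ℝ) else 0) ∂ℙ) +
  (∫ ω, am * (s + pk ω) * (if s + pk ω < 0 then (1:ℝ) else 0) ∂ℙ)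

/-- `α⁻(K) = ρ'E[P']K + E[a⁺(s+P'K)·1{s+P'K ≤ 0}] + E[a⁻(s+P'K)·1{s+P'K > 0}]`. -/
noncomputable def alphaMinus {Ω : Type*} [MeasurableSpace Ω] (ℙ : Measure Ω) {n : ℕ}
    (P : Ω → EuclideanSpace ℝ (Fin n)) (s ρ' ap am : ℝ)
    (K : EuclideanSpace ℝ (Fin n)) : ℝ :=
  let pk : Ω → ℝ := fun ω => inner ℝ (P ω) K
  ρ' * (∫ ω, pk ω ∂ℙ) +
  (∫ ω, ap * (s + pk ω) * (if s + pk ω ≤ 0 then (1:ℝ) else 0) ∂ℙ) +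
  (∫ ω, am * (s + pk ω) * (if 0 < s + pk ω then (1:ℝ) else 0) ∂ℙ)

/-- The piecewise-linear feedback policy `u = K⁺·Y·1{Y ≥ 0} + K⁻·Y·1{Y < 0}`. -/
noncomputable def uPol {n : ℕ} (Y : ℝ) (Kp Km : EuclideanSpace ℝ (Fin n)) :
    EuclideanSpace ℝ (Fin n) :=
  (Y * (if 0 ≤ Y then (1:ℝ) else 0)) • Kp + (Y * (if Y < 0 then (1:ℝ) else 0)) • Km

/-- `β⁺(K) = ρ'²K'E[PP']K + 2ρ'E[a⁺(s+P'K)(P'K)·1{s+P'K ≥ 0}]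
+ 2ρ'E[a⁻(s+P'K)(P'K)·1{s+P'K < 0}] + E[b⁺(s+P'K)²·1{s+P'K ≥ 0}]
+ E[b⁻(s+P'K)²·1{s+P'K < 0}]`, with `K'E[PP']K = E[(P'K)²]`. -/
noncomputable def betaPlus {Ω : Type*} [MeasurableSpace Ω] (ℙ : Measure Ω) {n : ℕ}
    (P : Ω → EuclideanSpace ℝ (Fin n)) (s ρ' ap am bp bm : ℝ)
    (K : EuclideanSpace ℝ (Fin n)) : ℝ :=
  let pk : Ω → ℝ := fun ω => inner ℝ (P ω) K
  ρ' ^ 2 * (∫ ω, (pk ω) ^ 2 ∂ℙ) +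
  2 * ρ' * (∫ ω, ap * (s + pk ω) * pk ω * (if 0 ≤ s + pk ω then (1:ℝ) else 0) ∂ℙ) +
  2 * ρ' * (∫ ω, am * (s + pk ω) * pk ω * (if s + pk ω < 0 then (1:ℝ) else 0) ∂ℙ) +
  (∫ ω, bp * (s + pk ω) ^ 2 * (if 0 ≤ s + pk ω then (1:ℝ) else 0) ∂ℙ) +
  (∫ ω, bm * (s + pk ω) ^ 2 * (if s + pk ω < 0 then (1:ℝ) else 0) ∂ℙ)

/-- `β⁻(K) = ρ'²K'E[PP']K + 2ρ'E[a⁺(s+P'K)(P'K)·1{s+P'K ≤ 0}]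
+ 2ρ'E[a⁻(s+P'K)(P'K)·1{s+P'K > 0}] + E[b⁺(s+P'K)²·1{s+P'K ≤ 0}]
+ E[b⁻(s+P'K)²·1{s+P'K > 0}]`, with `K'E[PP']K = E[(P'K)²]`. -/
noncomputable def betaMinus {Ω : Type*} [MeasurableSpace Ω] (ℙ : Measure Ω) {n : ℕ}
    (P : Ω → EuclideanSpace ℝ (Fin n)) (s ρ' ap am bp bm : ℝ)
    (K : EuclideanSpace ℝ (Fin n)) : ℝ :=
  let pk : Ω → ℝ := fun ω => inner ℝ (P ω) K
  ρ' ^ 2 * (∫ ω, (pk ω) ^ 2 ∂ℙ) +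
  2 * ρ' * (∫ ω, ap * (s + pk ω) * pk ω * (if s + pk ω ≤ 0 then (1:ℝ) else 0) ∂ℙ) +
  2 * ρ' * (∫ ω, am * (s + pk ω) * pk ω * (if 0 < s + pk ω then (1:ℝ) else 0) ∂ℙ) +
  (∫ ω, bp * (s + pk ω) ^ 2 * (if s + pk ω ≤ 0 then (1:ℝ) else 0) ∂ℙ) +
  (∫ ω, bm * (s + pk ω) ^ 2 * (if 0 < s + pk ω then (1:ℝ) else 0) ∂ℙ)

section aux
variable {Ω : Type*} [MeasurableSpace Ω] (ℙ : Measure Ω) [IsProbabilityMeasure ℙ]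
  {n : ℕ} (P : Ω → EuclideanSpace ℝ (Fin n))

lemma aux_sqsucc (hmeas : Measurable P)
    (hL2 : Integrable (fun ω => ‖P ω‖ ^ 2) ℙ) :
    Integrable (fun ω => (1 + ‖P ω‖) ^ 2) ℙ := by
  refine Integrable.mono' ((integrable_const (2:ℝ)).add (hL2.const_mul 2)) ?_ ?_
  · exact ((measurable_const.add hmeas.norm).pow_const 2).aestronglyMeasurable
  · filter_upwards with ω
    have hx : (0:ℝ) ≤ ‖P ω‖ := norm_nonneg _
    rw [Real.norm_eq_abs, abs_of_nonneg (by positivity)]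
    simp only [Pi.add_apply]
    nlinarith [sq_nonneg (1 - ‖P ω‖)]

lemma aux_shape (hmeas : Measurable P)
    (hL2 : Integrable (fun ω => ‖P ω‖ ^ 2) ℙ) (K : EuclideanSpace ℝ (Fin n))
    (c s t r : ℝ) (χ : Ω → ℝ) (hχm : Measurable χ) (hχb : ∀ ω, |χ ω| ≤ 1) :
    Integrable (fun ω => c * (s + (inner ℝ (P ω) K : ℝ)) * (t + r * (inner ℝ (P ω) K : ℝ)) * χ ω) ℙ := by
  have hp : Measurable (fun ω => (inner ℝ (P ω) K : ℝ)) := hmeas.inner measurable_const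
  refine Integrable.mono'
    ((aux_sqsucc ℙ P hmeas hL2).const_mul (|c| * ((|s| + ‖K‖) * (|t| + |r| * ‖K‖)))) ?_ ?_
  · exact (((measurable_const.mul (measurable_const.add hp)).mul
      (measurable_const.add (measurable_const.mul hp))).mul hχm).aestronglyMeasurable
  · filter_upwards with ω
    have hx : (0:ℝ) ≤ ‖P ω‖ := norm_nonneg _
    have hK : (0:ℝ) ≤ ‖K‖ := norm_nonneg _
    have hpk : |(inner ℝ (P ω) K : ℝ)| ≤ ‖P ω‖ * ‖K‖ := abs_real_inner_le_norm _ _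
    have h1 : |s + (inner ℝ (P ω) K : ℝ)| ≤ (|s| + ‖K‖) * (1 + ‖P ω‖) := by
      calc |s + (inner ℝ (P ω) K : ℝ)| ≤ |s| + |(inner ℝ (P ω) K : ℝ)| := abs_add_le _ _
        _ ≤ (|s| + ‖K‖) * (1 + ‖P ω‖) := by nlinarith [abs_nonneg s]
    have h2 : |t + r * (inner ℝ (P ω) K : ℝ)| ≤ (|t| + |r| * ‖K‖) * (1 + ‖P ω‖) := by
      calc |t + r * (inner ℝ (P ω) K : ℝ)| ≤ |t| + |r| * |(inner ℝ (P ω) K : ℝ)| := by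
            rw [← abs_mul]; exact abs_add_le _ _
        _ ≤ (|t| + |r| * ‖K‖) * (1 + ‖P ω‖) := by nlinarith [abs_nonneg t, abs_nonneg r]
    rw [Real.norm_eq_abs]
    calc |c * (s + (inner ℝ (P ω) K : ℝ)) * (t + r * (inner ℝ (P ω) K : ℝ)) * χ ω|
        = |c| * |s + (inner ℝ (P ω) K : ℝ)| * |t + r * (inner ℝ (P ω) K : ℝ)| * |χ ω| := by
          rw [abs_mul, abs_mul, abs_mul]
      _ ≤ |c| * ((|s| + ‖K‖) * (1 + ‖P ω‖)) * ((|t| + |r| * ‖K‖) * (1 + ‖P ω‖)) * 1 := by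
          gcongr <;> first | exact abs_nonneg _ | exact hχb ω
      _ = |c| * ((|s| + ‖K‖) * (|t| + |r| * ‖K‖)) * (1 + ‖P ω‖) ^ 2 := by ring

lemma aux_lincomb (c0 c1 c2 c3 c4 c5 c6 c7 c8 : ℝ)
    (g1 g2 g3 g4 g5 g6 g7 g8 : Ω → ℝ)
    (h1 : Integrable g1 ℙ) (h2 : Integrable g2 ℙ) (h3 : Integrable g3 ℙ)
    (h4 : Integrable g4 ℙ) (h5 : Integrable g5 ℙ) (h6 : Integrable g6 ℙ)
    (h7 : Integrable g7 ℙ) (h8 : Integrable g8 ℙ) :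
    Integrable (fun ω => c0 + c1 * g1 ω + c2 * g2 ω + c3 * g3 ω + c4 * g4 ω
      + c5 * g5 ω + c6 * g6 ω + c7 * g7 ω + c8 * g8 ω) ℙ ∧
    (∫ ω, (c0 + c1 * g1 ω + c2 * g2 ω + c3 * g3 ω + c4 * g4 ω
      + c5 * g5 ω + c6 * g6 ω + c7 * g7 ω + c8 * g8 ω) ∂ℙ)
    = c0 + c1 * (∫ ω, g1 ω ∂ℙ) + c2 * (∫ ω, g2 ω ∂ℙ) + c3 * (∫ ω, g3 ω ∂ℙ)
      + c4 * (∫ ω, g4 ω ∂ℙ) + c5 * (∫ ω, g5 ω ∂ℙ) + c6 * (∫ ω, g6 ω ∂ℙ)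
      + c7 * (∫ ω, g7 ω ∂ℙ) + c8 * (∫ ω, g8 ω ∂ℙ) := by
  have P0 : Integrable (fun _ : Ω => c0) ℙ := integrable_const c0
  have P1 : Integrable (fun ω => c0 + c1 * g1 ω) ℙ := P0.add (h1.const_mul c1)
  have P2 : Integrable (fun ω => c0 + c1 * g1 ω + c2 * g2 ω) ℙ := P1.add (h2.const_mul c2)
  have P3 : Integrable (fun ω => c0 + c1 * g1 ω + c2 * g2 ω + c3 * g3 ω) ℙ := P2.add (h3.const_mul c3)
  have P4 : Integrable (fun ω => c0 + c1 * g1 ω + c2 * g2 ω + c3 * g3 ω + c4 * g4 ω) ℙ := P3.add (h4.const_mul c4)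
  have P5 : Integrable (fun ω => c0 + c1 * g1 ω + c2 * g2 ω + c3 * g3 ω + c4 * g4 ω + c5 * g5 ω) ℙ := P4.add (h5.const_mul c5)
  have P6 : Integrable (fun ω => c0 + c1 * g1 ω + c2 * g2 ω + c3 * g3 ω + c4 * g4 ω + c5 * g5 ω + c6 * g6 ω) ℙ := P5.add (h6.const_mul c6)
  have P7 : Integrable (fun ω => c0 + c1 * g1 ω + c2 * g2 ω + c3 * g3 ω + c4 * g4 ω + c5 * g5 ω + c6 * g6 ω + c7 * g7 ω) ℙ := P6.add (h7.const_mul c7)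
  refine ⟨P7.add (h8.const_mul c8), ?_⟩
  rw [integral_add P7 (h8.const_mul c8), integral_add P6 (h7.const_mul c7),
    integral_add P5 (h6.const_mul c6), integral_add P4 (h5.const_mul c5),
    integral_add P3 (h4.const_mul c4), integral_add P2 (h3.const_mul c3),
    integral_add P1 (h2.const_mul c2), integral_add P0 (h1.const_mul c1),
    integral_const_mul, integral_const_mul, integral_const_mul, integral_const_mul,
    integral_const_mul, integral_const_mul, integral_const_mul, integral_const_mul,
    integral_const]
  simp [measure_univ]

lemma aux_core (hmeas : Measurable P)
    (hL2 : Integrable (fun ω => ‖P ω‖ ^ 2) ℙ)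
    (s ρ' ap am bp bm : ℝ) (K : EuclideanSpace ℝ (Fin n)) (χ χ' : Ω → ℝ)
    (hχm : Measurable χ) (hχ'm : Measurable χ')
    (hχb : ∀ ω, |χ ω| ≤ 1) (hχ'b : ∀ ω, |χ' ω| ≤ 1) :
    Integrable (fun ω => ρ' ^ 2 * (s + (inner ℝ (P ω) K : ℝ)) ^ 2
      + (2 * ρ' * ap + bp) * (s + (inner ℝ (P ω) K : ℝ)) ^ 2 * χ ω
      + (2 * ρ' * am + bm) * (s + (inner ℝ (P ω) K : ℝ)) ^ 2 * χ' ω) ℙ ∧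
    (∫ ω, (ρ' ^ 2 * (s + (inner ℝ (P ω) K : ℝ)) ^ 2
      + (2 * ρ' * ap + bp) * (s + (inner ℝ (P ω) K : ℝ)) ^ 2 * χ ω
      + (2 * ρ' * am + bm) * (s + (inner ℝ (P ω) K : ℝ)) ^ 2 * χ' ω) ∂ℙ)
    = ρ' ^ 2 * s ^ 2
      + 2 * ρ' * s * (ρ' * (∫ ω, (inner ℝ (P ω) K : ℝ) ∂ℙ)
          + (∫ ω, ap * (s + (inner ℝ (P ω) K : ℝ)) * χ ω ∂ℙ)
          + (∫ ω, am * (s + (inner ℝ (P ω) K : ℝ)) * χ' ω ∂ℙ))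
      + (ρ' ^ 2 * (∫ ω, (inner ℝ (P ω) K : ℝ) ^ 2 ∂ℙ)
          + 2 * ρ' * (∫ ω, ap * (s + (inner ℝ (P ω) K : ℝ)) * (inner ℝ (P ω) K : ℝ) * χ ω ∂ℙ)
          + 2 * ρ' * (∫ ω, am * (s + (inner ℝ (P ω) K : ℝ)) * (inner ℝ (P ω) K : ℝ) * χ' ω ∂ℙ)
          + (∫ ω, bp * (s + (inner ℝ (P ω) K : ℝ)) ^ 2 * χ ω ∂ℙ)
          + (∫ ω, bm * (s + (inner ℝ (P ω) K : ℝ)) ^ 2 * χ' ω ∂ℙ)) := by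
  have hone : ∀ ω : Ω, |(1:ℝ)| ≤ 1 := fun _ => by norm_num
  have h1 : Integrable (fun ω => (inner ℝ (P ω) K : ℝ)) ℙ :=
    (aux_shape ℙ P hmeas hL2 K 1 0 1 0 (fun _ => 1) measurable_const hone).congr
      (Filter.Eventually.of_forall fun ω => by ring)
  have h2 : Integrable (fun ω => (inner ℝ (P ω) K : ℝ) ^ 2) ℙ :=
    (aux_shape ℙ P hmeas hL2 K 1 0 0 1 (fun _ => 1) measurable_const hone).congr
      (Filter.Eventually.of_forall fun ω => by ring)
  have h3 : Integrable (fun ω => ap * (s + (inner ℝ (P ω) K : ℝ)) * χ ω) ℙ :=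
    (aux_shape ℙ P hmeas hL2 K ap s 1 0 χ hχm hχb).congr
      (Filter.Eventually.of_forall fun ω => by ring)
  have h4 : Integrable (fun ω => am * (s + (inner ℝ (P ω) K : ℝ)) * χ' ω) ℙ :=
    (aux_shape ℙ P hmeas hL2 K am s 1 0 χ' hχ'm hχ'b).congr
      (Filter.Eventually.of_forall fun ω => by ring)
  have h5 : Integrable (fun ω => ap * (s + (inner ℝ (P ω) K : ℝ)) * (inner ℝ (P ω) K : ℝ) * χ ω) ℙ :=
    (aux_shape ℙ P hmeas hL2 K ap s 0 1 χ hχm hχb).congr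
      (Filter.Eventually.of_forall fun ω => by ring)
  have h6 : Integrable (fun ω => am * (s + (inner ℝ (P ω) K : ℝ)) * (inner ℝ (P ω) K : ℝ) * χ' ω) ℙ :=
    (aux_shape ℙ P hmeas hL2 K am s 0 1 χ' hχ'm hχ'b).congr
      (Filter.Eventually.of_forall fun ω => by ring)
  have h7 : Integrable (fun ω => bp * (s + (inner ℝ (P ω) K : ℝ)) ^ 2 * χ ω) ℙ :=
    (aux_shape ℙ P hmeas hL2 K bp s s 1 χ hχm hχb).congr
      (Filter.Eventually.of_forall fun ω => by ring)
  have h8 : Integrable (fun ω => bm * (s + (inner ℝ (P ω) K : ℝ)) ^ 2 * χ' ω) ℙ :=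
    (aux_shape ℙ P hmeas hL2 K bm s s 1 χ' hχ'm hχ'b).congr
      (Filter.Eventually.of_forall fun ω => by ring)
  obtain ⟨hi, he⟩ := aux_lincomb ℙ (ρ' ^ 2 * s ^ 2) (2 * ρ' ^ 2 * s) (ρ' ^ 2)
    (2 * ρ' * s) (2 * ρ' * s) (2 * ρ') (2 * ρ') 1 1 _ _ _ _ _ _ _ _
    h1 h2 h3 h4 h5 h6 h7 h8
  have heq : ∀ ω : Ω, ρ' ^ 2 * (s + (inner ℝ (P ω) K : ℝ)) ^ 2
      + (2 * ρ' * ap + bp) * (s + (inner ℝ (P ω) K : ℝ)) ^ 2 * χ ω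
      + (2 * ρ' * am + bm) * (s + (inner ℝ (P ω) K : ℝ)) ^ 2 * χ' ω
      = ρ' ^ 2 * s ^ 2 + 2 * ρ' ^ 2 * s * (inner ℝ (P ω) K : ℝ)
      + ρ' ^ 2 * (inner ℝ (P ω) K : ℝ) ^ 2
      + 2 * ρ' * s * (ap * (s + (inner ℝ (P ω) K : ℝ)) * χ ω)
      + 2 * ρ' * s * (am * (s + (inner ℝ (P ω) K : ℝ)) * χ' ω)
      + 2 * ρ' * (ap * (s + (inner ℝ (P ω) K : ℝ)) * (inner ℝ (P ω) K : ℝ) * χ ω)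
      + 2 * ρ' * (am * (s + (inner ℝ (P ω) K : ℝ)) * (inner ℝ (P ω) K : ℝ) * χ' ω)
      + 1 * (bp * (s + (inner ℝ (P ω) K : ℝ)) ^ 2 * χ ω)
      + 1 * (bm * (s + (inner ℝ (P ω) K : ℝ)) ^ 2 * χ' ω) := fun ω => by ring
  constructor
  · exact hi.congr (Filter.Eventually.of_forall fun ω => (heq ω).symm)
  · rw [integral_congr_ae (Filter.Eventually.of_forall heq), he]
    ring
end aux

/-- For every `Y ∈ ℝ` and `K⁺, K⁻ ∈ ℝⁿ`, with `u = K⁺·Y·1{Y ≥ 0} + K⁻·Y·1{Y < 0}`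
(so `Y' = sY + P'u`), the random variable `q` is integrable and
`E[q] = ρ'²s²·Y² + (2ρ's·α⁺(K⁺)+β⁺(K⁺))·Y²·1{Y ≥ 0} + (2ρ's·α⁻(K⁻)+β⁻(K⁻))·Y²·1{Y < 0}`. -/
theorem expectation_q_eq {Ω : Type*} [MeasurableSpace Ω] (ℙ : Measure Ω)
    [IsProbabilityMeasure ℙ] {n : ℕ} (hn : 1 ≤ n)
    (P : Ω → EuclideanSpace ℝ (Fin n)) (hmeas : Measurable P)
    (hL2 : Integrable (fun ω => ‖P ω‖ ^ 2) ℙ)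
    (s ρ' ap am bp bm : ℝ) (hs : 0 < s) (hρ : 0 < ρ') :
    ∀ (Y : ℝ) (Kp Km : EuclideanSpace ℝ (Fin n)),
      Integrable (fun ω => qRV P s ρ' ap am bp bm Y (uPol Y Kp Km) ω) ℙ ∧
      (∫ ω, qRV P s ρ' ap am bp bm Y (uPol Y Kp Km) ω ∂ℙ) =
        ρ' ^ 2 * s ^ 2 * Y ^ 2 +
        (2 * ρ' * s * alphaPlus ℙ P s ρ' ap am Kp + betaPlus ℙ P s ρ' ap am bp bm Kp) *
          Y ^ 2 * (if 0 ≤ Y then (1:ℝ) else 0) +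
        (2 * ρ' * s * alphaMinus ℙ P s ρ' ap am Km + betaMinus ℙ P s ρ' ap am bp bm Km) *
          Y ^ 2 * (if Y < 0 then (1:ℝ) else 0) := by
  intro Y Kp Km
  have hp : ∀ K : EuclideanSpace ℝ (Fin n), Measurable (fun ω => (inner ℝ (P ω) K : ℝ)) :=
    fun K => hmeas.inner measurable_const
  by_cases hY : 0 ≤ Y
  · -- case 0 ≤ Y
    have hu : uPol Y Kp Km = Y • Kp := by
      simp [uPol, if_pos hY, if_neg (not_lt.2 hY)]
    obtain ⟨hfi, hfe⟩ := aux_core ℙ P hmeas hL2 s ρ' ap am bp bm Kp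
      (fun ω => if 0 ≤ s + (inner ℝ (P ω) Kp : ℝ) then (1:ℝ) else 0)
      (fun ω => if s + (inner ℝ (P ω) Kp : ℝ) < 0 then (1:ℝ) else 0)
      (Measurable.ite (measurableSet_le measurable_const (measurable_const.add (hp Kp)))
        measurable_const measurable_const)
      (Measurable.ite (measurableSet_lt (measurable_const.add (hp Kp)) measurable_const)
        measurable_const measurable_const)
      (fun ω => by split <;> norm_num)
      (fun ω => by split <;> norm_num)
    have hq : ∀ ω, qRV P s ρ' ap am bp bm Y (uPol Y Kp Km) ω
        = Y ^ 2 * (ρ' ^ 2 * (s + (inner ℝ (P ω) Kp : ℝ)) ^ 2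
          + (2 * ρ' * ap + bp) * (s + (inner ℝ (P ω) Kp : ℝ)) ^ 2 *
              (if 0 ≤ s + (inner ℝ (P ω) Kp : ℝ) then (1:ℝ) else 0)
          + (2 * ρ' * am + bm) * (s + (inner ℝ (P ω) Kp : ℝ)) ^ 2 *
              (if s + (inner ℝ (P ω) Kp : ℝ) < 0 then (1:ℝ) else 0)) := by
      intro ω
      have hin : (inner ℝ (P ω) (uPol Y Kp Km) : ℝ) = Y * inner ℝ (P ω) Kp := by
        rw [hu]; exact real_inner_smul_right _ _ _
      simp only [qRV, hin]
      have hY' : s * Y + Y * (inner ℝ (P ω) Kp : ℝ) = Y * (s + inner ℝ (P ω) Kp) := by ring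
      rw [hY']
      rcases eq_or_lt_of_le hY with h0 | hpos
      · rw [← h0]; norm_num
      · have e1 : (if 0 ≤ Y * (s + (inner ℝ (P ω) Kp : ℝ)) then (1:ℝ) else 0)
            = (if 0 ≤ s + (inner ℝ (P ω) Kp : ℝ) then (1:ℝ) else 0) := by
          rcases le_or_gt 0 (s + (inner ℝ (P ω) Kp : ℝ)) with h | h
          · rw [if_pos (mul_nonneg hpos.le h), if_pos h]
          · rw [if_neg (not_le.2 (mul_neg_of_pos_of_neg hpos h)), if_neg (not_le.2 h)]
        have e2 : (if Y * (s + (inner ℝ (P ω) Kp : ℝ)) < 0 then (1:ℝ) else 0)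
            = (if s + (inner ℝ (P ω) Kp : ℝ) < 0 then (1:ℝ) else 0) := by
          rcases le_or_gt 0 (s + (inner ℝ (P ω) Kp : ℝ)) with h | h
          · rw [if_neg (not_lt.2 (mul_nonneg hpos.le h)), if_neg (not_lt.2 h)]
          · rw [if_pos (mul_neg_of_pos_of_neg hpos h), if_pos h]
        rw [e1, e2]; ring
    constructor
    · exact (hfi.const_mul (Y ^ 2)).congr (Filter.Eventually.of_forall fun ω => (hq ω).symm)
    · rw [integral_congr_ae (Filter.Eventually.of_forall hq), integral_const_mul, hfe]
      simp only [alphaPlus, betaPlus, if_pos hY, if_neg (not_lt.2 hY)]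
      ring
  · -- case Y < 0
    have hYn : Y < 0 := not_le.1 hY
    have hu : uPol Y Kp Km = Y • Km := by
      simp [uPol, if_neg hY, if_pos hYn]
    obtain ⟨hfi, hfe⟩ := aux_core ℙ P hmeas hL2 s ρ' ap am bp bm Km
      (fun ω => if s + (inner ℝ (P ω) Km : ℝ) ≤ 0 then (1:ℝ) else 0)
      (fun ω => if 0 < s + (inner ℝ (P ω) Km : ℝ) then (1:ℝ) else 0)
      (Measurable.ite (measurableSet_le (measurable_const.add (hp Km)) measurable_const)
        measurable_const measurable_const)
      (Measurable.ite (measurableSet_lt measurable_const (measurable_const.add (hp Km)))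
        measurable_const measurable_const)
      (fun ω => by split <;> norm_num)
      (fun ω => by split <;> norm_num)
    have hq : ∀ ω, qRV P s ρ' ap am bp bm Y (uPol Y Kp Km) ω
        = Y ^ 2 * (ρ' ^ 2 * (s + (inner ℝ (P ω) Km : ℝ)) ^ 2
          + (2 * ρ' * ap + bp) * (s + (inner ℝ (P ω) Km : ℝ)) ^ 2 *
              (if s + (inner ℝ (P ω) Km : ℝ) ≤ 0 then (1:ℝ) else 0)
          + (2 * ρ' * am + bm) * (s + (inner ℝ (P ω) Km : ℝ)) ^ 2 *
              (if 0 < s + (inner ℝ (P ω) Km : ℝ) then (1:ℝ) else 0)) := by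
      intro ω
      have hin : (inner ℝ (P ω) (uPol Y Kp Km) : ℝ) = Y * inner ℝ (P ω) Km := by
        rw [hu]; exact real_inner_smul_right _ _ _
      simp only [qRV, hin]
      have hY' : s * Y + Y * (inner ℝ (P ω) Km : ℝ) = Y * (s + inner ℝ (P ω) Km) := by ring
      rw [hY']
      have e1 : (if 0 ≤ Y * (s + (inner ℝ (P ω) Km : ℝ)) then (1:ℝ) else 0)
          = (if s + (inner ℝ (P ω) Km : ℝ) ≤ 0 then (1:ℝ) else 0) := by
        rcases le_or_gt (s + (inner ℝ (P ω) Km : ℝ)) 0 with h | h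
        · rw [if_pos (show (0:ℝ) ≤ Y * (s + (inner ℝ (P ω) Km : ℝ)) by nlinarith), if_pos h]
        · rw [if_neg (not_le.2 (mul_neg_of_neg_of_pos hYn h)), if_neg (not_le.2 h)]
      have e2 : (if Y * (s + (inner ℝ (P ω) Km : ℝ)) < 0 then (1:ℝ) else 0)
          = (if 0 < s + (inner ℝ (P ω) Km : ℝ) then (1:ℝ) else 0) := by
        rcases le_or_gt (s + (inner ℝ (P ω) Km : ℝ)) 0 with h | h
        · rw [if_neg (not_lt.2 (show (0:ℝ) ≤ Y * (s + (inner ℝ (P ω) Km : ℝ)) by nlinarith)), if_neg (not_lt.2 h)]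
        · rw [if_pos (mul_neg_of_neg_of_pos hYn h), if_pos h]
      rw [e1, e2]; ring
    constructor
    · exact (hfi.const_mul (Y ^ 2)).congr (Filter.Eventually.of_forall fun ω => (hq ω).symm)
    · rw [integral_congr_ae (Filter.Eventually.of_forall hq), integral_const_mul, hfe]
      simp only [alphaMinus, betaMinus, if_neg hY, if_pos hYn]
      ring
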